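/- Let f = (f_n)_{n=0}^M be a sequence in X, let k be an integer with 1 ≤ k ≤ M−1, and let m_k = (1/(M+1−k)) Σ_{n=k}^M D^k f_n be the mean of the k-th difference quotients. Then for every k ≤ n ≤ M, ‖D^k f_n − m_k‖ ≤ √2 · c_A · ‖D^k f‖_0^{1/2} · ‖D^{k+1} f‖_0^{1/2}, where c_A = √(2 + √2/2). -/

import Mathlib

noncomputable def cA : ℝ := Real.sqrt (2 + Real.sqrt 2 / 2)
noncomputable def cA1 : ℝ := (1 + (Real.sqrt 2 * cA) ^ ((4:ℝ)/3)) ^ ((3:ℝ)/4)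
noncomputable def cB1 : ℝ := 2 * Real.sqrt (1 + 2 * (cA * cA1)^2)

/-- `dAux j = (d̂_j, ∏_{i≤j} d̂_i^{1/(i+1)})`, realizing the recursion (4.20). -/
noncomputable def dAux : ℕ → ℝ × ℝ
  | 0 => (cB1, cB1)
  | (j+1) =>
      let d : ℝ := (1 + (dAux j).1 ^ (2*((j:ℝ)+2))) ^ (((j:ℝ)+2) / (2*((j:ℝ)+1)*((j:ℝ)+3))) *
                   ((dAux j).2) ^ (((j:ℝ)+2) / (((j:ℝ)+1)*((j:ℝ)+3)))
      (d, (dAux j).2 * d ^ (1/((j:ℝ)+2)))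

noncomputable def dHat (j : ℕ) : ℝ := (dAux j).1

/-- `cAux j = (ĉ_j, ∏_{i≤j} ĉ_i^{1/(i+1)})`, realizing the recursion (4.19). -/
noncomputable def cAux : ℕ → ℝ × ℝ
  | 0 => (cB1 / Real.sqrt 2, cB1 / Real.sqrt 2)
  | (j+1) =>
      let c : ℝ := (1 + dHat j ^ (2*((j:ℝ)+2))) ^ (((j:ℝ)+2) / (2*((j:ℝ)+1)*((j:ℝ)+3))) *
                   ((cAux j).2) ^ (((j:ℝ)+2) / (((j:ℝ)+1)*((j:ℝ)+3)))
      (c, (cAux j).2 * c ^ (1/((j:ℝ)+2)))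

noncomputable def cHat (j : ℕ) : ℝ := (cAux j).1

/-- the constant `c_m = ∏_{j=0}^{m-2} ĉ_j^{1/(j+1)}` (equal to `1` for `m = 1`). -/
noncomputable def cConst (m : ℕ) : ℝ := ∏ j ∈ Finset.range (m-1), cHat j ^ (1/((j:ℝ)+1))

/-- backward difference quotient of a sequence. -/
noncomputable def Dq {X : Type*} [NormedAddCommGroup X] [NormedSpace ℝ X] (τ : ℝ) (f : ℕ → X) : ℕ → X :=
  fun n => τ⁻¹ • (f n - f (n - 1))

/-- discrete `L²` norm `(τ Σ_{n=a}^{b} ‖f n‖²)^{1/2}`. -/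
noncomputable def seqNorm0 {X : Type*} [NormedAddCommGroup X]
    (τ : ℝ) (a b : ℕ) (f : ℕ → X) : ℝ :=
  Real.sqrt (τ * ∑ n ∈ Finset.Icc a b, ‖f n‖^2)

/-- `T_0 = T` and `T_j = (M+1−j)τ` for `j ≥ 1`. -/
noncomputable def Tk (τ T : ℝ) (M j : ℕ) : ℝ := if j = 0 then T else ((M:ℝ) + 1 - (j:ℝ)) * τ

/-- the scale-invariant norm `‖Dᵏf‖_m = (Σ_{j=k}^{k+m} T_j^{−2(m+k−j)} ‖Dʲf‖₀²)^{1/2}`. -/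
noncomputable def normm {X : Type*} [NormedAddCommGroup X] [NormedSpace ℝ X]
    (τ T : ℝ) (M k m : ℕ) (f : ℕ → X) : ℝ :=
  Real.sqrt (∑ j ∈ Finset.Icc k (k+m),
    (seqNorm0 τ j M ((Dq τ)^[j] f))^2 / (Tk τ T M j)^(2*(m+k-j)))

private lemma sum_Icc_eq_sum_range'' {E : Type*} [AddCommMonoid E] (f : ℕ → E) (a b : ℕ) :
    ∑ j ∈ Finset.Icc a b, f j = ∑ i ∈ Finset.range (b + 1 - a), f (a + i) := by
  rw [show Finset.Icc a b = Finset.Ico a (b+1) from by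
      rw [Nat.Icc_eq_range', Nat.Ico_eq_range'],
    Finset.sum_Ico_eq_sum_range]

private lemma tele_sum {E : Type*} [AddCommGroup E] (v : ℕ → E) {a b : ℕ} (hab : a ≤ b) :
    ∑ j ∈ Finset.Icc (a+1) b, (v j - v (j-1)) = v b - v a := by
  rw [sum_Icc_eq_sum_range'']
  have h1 : b + 1 - (a+1) = b - a := by omega
  rw [h1]
  have h2 : ∀ i, v (a + 1 + i) - v (a + 1 + i - 1) = v (a + (i+1)) - v (a + i) := by
    intro i
    congr 2 <;> omega
  calc ∑ i ∈ Finset.range (b-a), (v (a + 1 + i) - v (a + 1 + i - 1))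
      = ∑ i ∈ Finset.range (b-a), ((fun i => v (a+i)) (i+1) - (fun i => v (a+i)) i) := by
        refine Finset.sum_congr rfl fun i _ => ?_
        simpa using h2 i
    _ = v (a + (b-a)) - v (a + 0) := Finset.sum_range_sub (fun i => v (a+i)) (b-a)
    _ = v b - v a := by rw [show a + (b-a) = b by omega, Nat.add_zero]

private lemma cs_sum (s : Finset ℕ) (x y : ℕ → ℝ) (hx : ∀ i ∈ s, 0 ≤ x i)
    (hy : ∀ i ∈ s, 0 ≤ y i) :
    ∑ i ∈ s, x i * y i ≤ Real.sqrt (∑ i ∈ s, x i ^ 2) * Real.sqrt (∑ i ∈ s, y i ^ 2) := by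
  have hs : 0 ≤ ∑ i ∈ s, x i * y i :=
    Finset.sum_nonneg fun i hi => mul_nonneg (hx i hi) (hy i hi)
  have h := Finset.sum_mul_sq_le_sq_mul_sq s x y
  calc ∑ i ∈ s, x i * y i = Real.sqrt ((∑ i ∈ s, x i * y i)^2) := (Real.sqrt_sq hs).symm
    _ ≤ Real.sqrt ((∑ i ∈ s, x i ^ 2) * ∑ i ∈ s, y i ^ 2) := Real.sqrt_le_sqrt h
    _ = _ := Real.sqrt_mul (Finset.sum_nonneg fun i _ => sq_nonneg _) _

private lemma norm_sum_sq_le {X : Type*} [NormedAddCommGroup X] (s : Finset ℕ) (v : ℕ → X) :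
    ‖∑ j ∈ s, v j‖^2 ≤ (s.card : ℝ) * ∑ j ∈ s, ‖v j‖^2 := by
  have h1 : ‖∑ j ∈ s, v j‖ ≤ ∑ j ∈ s, ‖v j‖ := norm_sum_le _ _
  have h2 : (∑ j ∈ s, 1 * ‖v j‖)^2 ≤ (∑ j ∈ s, (1:ℝ)^2) * ∑ j ∈ s, ‖v j‖^2 :=
    Finset.sum_mul_sq_le_sq_mul_sq s (fun _ => 1) (fun j => ‖v j‖)
  simp only [one_mul, one_pow, Finset.sum_const, nsmul_eq_mul, mul_one] at h2
  calc ‖∑ j ∈ s, v j‖^2 ≤ (∑ j ∈ s, ‖v j‖)^2 :=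
        pow_le_pow_left₀ (norm_nonneg _) h1 2
    _ ≤ _ := h2


set_option maxHeartbeats 1600000 in
/-- Estimate (ag5): discrete Agmon inequality applied to the recentered
difference-quotient sequence `Dᵏf − m_k`. -/
theorem agmon_recentered_dq
    {X : Type*} [NormedAddCommGroup X] [InnerProductSpace ℝ X] [CompleteSpace X]
    (T : ℝ) (hT : 0 < T) (M : ℕ) (hM : 0 < M) (τ : ℝ) (hτ : τ = T / M)
    (f : ℕ → X) (k : ℕ) (hk : 1 ≤ k) (hkM : k + 1 ≤ M)
    (mk : X) (hmk : mk = ((M:ℝ) + 1 - (k:ℝ))⁻¹ • ∑ n ∈ Finset.Icc k M, (Dq τ)^[k] f n)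
    (n : ℕ) (hnk : k ≤ n) (hnM : n ≤ M) :
    ‖(Dq τ)^[k] f n - mk‖ ≤
      Real.sqrt 2 * cA * (seqNorm0 τ k M ((Dq τ)^[k] f)) ^ ((1:ℝ)/2) *
        (seqNorm0 τ (k+1) M ((Dq τ)^[k+1] f)) ^ ((1:ℝ)/2) := by
  have hτ0 : 0 < τ := by rw [hτ]; positivity
  set g : ℕ → X := (Dq τ)^[k] f with hg
  set Dg : ℕ → X := (Dq τ)^[k+1] f with hDgdef
  have hDg : ∀ j, g j - g (j-1) = τ • Dg j := by
    intro j
    have h1 : Dg j = τ⁻¹ • (g j - g (j-1)) := by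
      rw [hDgdef, Function.iterate_succ_apply']; rfl
    rw [h1, smul_smul, mul_inv_cancel₀ (ne_of_gt hτ0), one_smul]
  set I : Finset ℕ := Finset.Icc k M with hI
  set J : Finset ℕ := Finset.Icc (k+1) M with hJ
  set N : ℕ := M + 1 - k with hN
  have hN2 : 2 ≤ N := by omega
  have hNcast : (N:ℝ) = (M:ℝ) + 1 - (k:ℝ) := by
    rw [hN]
    have : ((M + 1 - k : ℕ) : ℝ) = ((M+1 : ℕ) : ℝ) - (k : ℝ) :=
      Nat.cast_sub (by omega)
    rw [this]; push_cast; ring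
  have hNpos : (0:ℝ) < (N:ℝ) := by
    rw [hNcast]
    have h' : (k:ℝ) + 1 ≤ (M:ℝ) := by exact_mod_cast hkM
    linarith
  have hcardI : (I.card : ℝ) = (N:ℝ) := by rw [hI, Nat.card_Icc]
  set h : ℕ → X := fun j => g j - mk with hh
  -- sums
  set S : ℝ := ∑ j ∈ I, ‖h j‖^2 with hS
  set SG : ℝ := ∑ j ∈ I, ‖g j‖^2 with hSG
  set SD : ℝ := ∑ j ∈ J, ‖Dg j‖^2 with hSD
  have hSnn : 0 ≤ S := Finset.sum_nonneg fun j _ => sq_nonneg _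
  have hSGnn : 0 ≤ SG := Finset.sum_nonneg fun j _ => sq_nonneg _
  have hSDnn : 0 ≤ SD := Finset.sum_nonneg fun j _ => sq_nonneg _
  -- sum of g equals N • mk
  have hsumg : ∑ j ∈ I, g j = (N:ℝ) • mk := by
    rw [hmk, smul_smul, ← hNcast, mul_inv_cancel₀ (ne_of_gt hNpos), one_smul]
  have hzero : ∑ j ∈ I, h j = 0 := by
    simp only [hh, Finset.sum_sub_distrib, hsumg, Finset.sum_const]
    rw [← Nat.cast_smul_eq_nsmul ℝ, hcardI, sub_self]
  -- (1) S ≤ SG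
  have hS_le : S ≤ SG := by
    have hexp : S = ∑ j ∈ I, (‖g j‖^2 - 2 * inner ℝ (g j) mk + ‖mk‖^2) :=
      Finset.sum_congr rfl fun j _ => norm_sub_sq_real _ _
    have hin : ∑ j ∈ I, (inner ℝ (g j) mk : ℝ) = (N:ℝ) * ‖mk‖^2 := by
      rw [← sum_inner, hsumg, real_inner_smul_left, real_inner_self_eq_norm_sq]
    rw [hexp, Finset.sum_add_distrib, Finset.sum_sub_distrib, ← Finset.mul_sum, hin,
      Finset.sum_const, ← Nat.cast_smul_eq_nsmul ℝ, hcardI, smul_eq_mul]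
    have hmknn : (0:ℝ) ≤ (N:ℝ) * ‖mk‖^2 := by positivity
    nlinarith [hmknn]
  -- (2) pair bound
  have hPairG : ∀ a b, k ≤ a → a ≤ b → b ≤ M → ‖g b - g a‖^2 ≤ τ^2 * (N:ℝ) * SD := by
    intro a b hka hab hbM
    have htel : g b - g a = τ • ∑ j ∈ Finset.Icc (a+1) b, Dg j := by
      rw [Finset.smul_sum, ← tele_sum g hab]
      exact Finset.sum_congr rfl fun j _ => hDg j
    have hsub : Finset.Icc (a+1) b ⊆ J := by
      rw [hJ]; apply Finset.Icc_subset_Icc <;> omega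
    have hcard : ((Finset.Icc (a+1) b).card : ℝ) ≤ (N:ℝ) := by
      have hc : (Finset.Icc (a+1) b).card ≤ N := by rw [Nat.card_Icc]; omega
      exact_mod_cast hc
    have h1 : ‖∑ j ∈ Finset.Icc (a+1) b, Dg j‖^2 ≤ (N:ℝ) * SD := by
      calc ‖∑ j ∈ Finset.Icc (a+1) b, Dg j‖^2
          ≤ ((Finset.Icc (a+1) b).card : ℝ) * ∑ j ∈ Finset.Icc (a+1) b, ‖Dg j‖^2 :=
            norm_sum_sq_le _ _
        _ ≤ (N:ℝ) * SD := by
            apply mul_le_mul hcard ?_ ?_ (le_of_lt hNpos)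
            · exact Finset.sum_le_sum_of_subset_of_nonneg hsub fun j _ _ => sq_nonneg _
            · exact Finset.sum_nonneg fun j _ => sq_nonneg _
    calc ‖g b - g a‖^2 = τ^2 * ‖∑ j ∈ Finset.Icc (a+1) b, Dg j‖^2 := by
          rw [htel, norm_smul, Real.norm_eq_abs, abs_of_pos hτ0, mul_pow]
      _ ≤ τ^2 * ((N:ℝ) * SD) := by
          apply mul_le_mul_of_nonneg_left h1 (sq_nonneg _)
      _ = τ^2 * (N:ℝ) * SD := by ring
  have hPair : ∀ a ∈ I, ∀ b ∈ I, ‖h a - h b‖^2 ≤ τ^2 * (N:ℝ) * SD := by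
    intro a ha b hb
    rw [Finset.mem_Icc] at ha hb
    have hab : h a - h b = g a - g b := by simp only [hh]; abel
    rw [hab]
    rcases le_total a b with hle | hle
    · rw [norm_sub_rev]; exact hPairG a b ha.1 hle hb.2
    · exact hPairG b a hb.1 hle ha.2
  -- (3) Poincare : 2 N S ≤ N^2 * (τ^2 N SD)
  have hdouble : ∑ a ∈ I, ∑ b ∈ I, ‖h a - h b‖^2 = 2 * (N:ℝ) * S := by
    have hexp : ∀ a b : ℕ, ‖h a - h b‖^2 = ‖h a‖^2 - 2 * inner ℝ (h a) (h b) + ‖h b‖^2 :=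
      fun a b => norm_sub_sq_real _ _
    have hin0 : ∀ a, ∑ b ∈ I, (inner ℝ (h a) (h b) : ℝ) = 0 := by
      intro a; rw [← inner_sum, hzero, inner_zero_right]
    have : ∀ a ∈ I, ∑ b ∈ I, ‖h a - h b‖^2 = (N:ℝ) * ‖h a‖^2 + S := by
      intro a _
      simp only [hexp]
      rw [Finset.sum_add_distrib, Finset.sum_sub_distrib, ← Finset.mul_sum, hin0,
        Finset.sum_const, ← Nat.cast_smul_eq_nsmul ℝ, hcardI, smul_eq_mul]
      ring
    rw [Finset.sum_congr rfl this, Finset.sum_add_distrib, ← Finset.mul_sum, ← hS,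
      Finset.sum_const, ← Nat.cast_smul_eq_nsmul ℝ, hcardI, smul_eq_mul]
    ring
  have hPoin : 2 * (N:ℝ) * S ≤ (N:ℝ)^2 * (τ^2 * (N:ℝ) * SD) := by
    rw [← hdouble]
    calc ∑ a ∈ I, ∑ b ∈ I, ‖h a - h b‖^2
        ≤ ∑ a ∈ I, ∑ b ∈ I, τ^2 * (N:ℝ) * SD := by
          apply Finset.sum_le_sum; intro a ha
          apply Finset.sum_le_sum; intro b hb
          exact hPair a ha b hb
      _ = (N:ℝ)^2 * (τ^2 * (N:ℝ) * SD) := by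
          simp only [Finset.sum_const, nsmul_eq_mul, hcardI]
          ring

  -- (4) a minimal element
  have hInonempty : I.Nonempty := ⟨k, by rw [hI, Finset.mem_Icc]; omega⟩
  obtain ⟨m₀, hm₀I, hm₀min⟩ := I.exists_min_image (fun j => ‖h j‖^2) hInonempty
  have hmin : (N:ℝ) * ‖h m₀‖^2 ≤ S := by
    calc (N:ℝ) * ‖h m₀‖^2 = ∑ _j ∈ I, ‖h m₀‖^2 := by
          rw [Finset.sum_const, ← Nat.cast_smul_eq_nsmul ℝ, hcardI, smul_eq_mul]
      _ ≤ S := Finset.sum_le_sum fun j hj => hm₀min j hj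
  -- (5) telescope bound
  set V : ℝ := ∑ j ∈ J, |‖h j‖^2 - ‖h (j-1)‖^2| with hV
  have habs : ∀ a b, k ≤ a → a ≤ b → b ≤ M → |‖h b‖^2 - ‖h a‖^2| ≤ V := by
    intro a b hka hab hbM
    have htel : ‖h b‖^2 - ‖h a‖^2 = ∑ j ∈ Finset.Icc (a+1) b, (‖h j‖^2 - ‖h (j-1)‖^2) :=
      (tele_sum (fun j => ‖h j‖^2) hab).symm
    rw [htel]
    calc |∑ j ∈ Finset.Icc (a+1) b, (‖h j‖^2 - ‖h (j-1)‖^2)|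
        ≤ ∑ j ∈ Finset.Icc (a+1) b, |‖h j‖^2 - ‖h (j-1)‖^2| :=
          Finset.abs_sum_le_sum_abs _ _
      _ ≤ V := by
          apply Finset.sum_le_sum_of_subset_of_nonneg
          · rw [hJ]; apply Finset.Icc_subset_Icc <;> omega
          · intro j _ _; exact abs_nonneg _
  have htelbound : ‖h n‖^2 ≤ ‖h m₀‖^2 + V := by
    rw [hI, Finset.mem_Icc] at hm₀I
    rcases le_total m₀ n with hle | hle
    · have h1 := habs m₀ n hm₀I.1 hle hnM
      have h2 : ‖h n‖^2 - ‖h m₀‖^2 ≤ V := le_trans (le_abs_self _) h1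
      linarith
    · have h1 := habs n m₀ hnk hle hm₀I.2
      have h2 : ‖h n‖^2 - ‖h m₀‖^2 ≤ |‖h m₀‖^2 - ‖h n‖^2| := by
        rw [abs_sub_comm]; exact le_abs_self _
      linarith
  -- (6) bound on V
  have hVle : V ≤ 2 * τ * Real.sqrt SD * Real.sqrt S := by
    have hterm : ∀ j ∈ J, |‖h j‖^2 - ‖h (j-1)‖^2| ≤ (τ * ‖Dg j‖) * (‖h j‖ + ‖h (j-1)‖) := by
      intro j _
      have hd : h j - h (j-1) = τ • Dg j := by
        rw [hh]; simp only []
        rw [show g j - mk - (g (j-1) - mk) = g j - g (j-1) by abel_nf]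
        exact hDg j
      have h1 : ‖h j‖^2 - ‖h (j-1)‖^2 = (‖h j‖ - ‖h (j-1)‖) * (‖h j‖ + ‖h (j-1)‖) := by ring
      rw [h1, abs_mul, abs_of_nonneg (by positivity : (0:ℝ) ≤ ‖h j‖ + ‖h (j-1)‖)]
      apply mul_le_mul_of_nonneg_right _ (by positivity)
      calc |‖h j‖ - ‖h (j-1)‖| ≤ ‖h j - h (j-1)‖ := abs_norm_sub_norm_le _ _
        _ = τ * ‖Dg j‖ := by rw [hd, norm_smul, Real.norm_eq_abs, abs_of_pos hτ0]
    have hcs : ∑ j ∈ J, (τ * ‖Dg j‖) * (‖h j‖ + ‖h (j-1)‖)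
        ≤ Real.sqrt (∑ j ∈ J, (τ * ‖Dg j‖)^2) * Real.sqrt (∑ j ∈ J, (‖h j‖ + ‖h (j-1)‖)^2) :=
      cs_sum J _ _ (fun j _ => by positivity) (fun j _ => by positivity)
    have hx : ∑ j ∈ J, (τ * ‖Dg j‖)^2 = τ^2 * SD := by
      rw [hSD, Finset.mul_sum]; exact Finset.sum_congr rfl fun j _ => by ring
    have hyle : ∑ j ∈ J, (‖h j‖ + ‖h (j-1)‖)^2 ≤ 4 * S := by
      have h2 : ∑ j ∈ J, ‖h j‖^2 ≤ S := by
        rw [hS]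
        apply Finset.sum_le_sum_of_subset_of_nonneg
        · rw [hI, hJ]; apply Finset.Icc_subset_Icc <;> omega
        · intro j _ _; exact sq_nonneg _
      have h3 : ∑ j ∈ J, ‖h (j-1)‖^2 ≤ S := by
        rw [hJ, sum_Icc_eq_sum_range'' (fun j => ‖h (j-1)‖^2), hS, hI,
          sum_Icc_eq_sum_range'' (fun j => ‖h j‖^2)]
        calc ∑ i ∈ Finset.range (M + 1 - (k+1)), ‖h (k + 1 + i - 1)‖^2
            = ∑ i ∈ Finset.range (M + 1 - (k+1)), ‖h (k + i)‖^2 := by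
              refine Finset.sum_congr rfl fun i _ => ?_
              rw [show k + 1 + i - 1 = k + i by omega]
          _ ≤ ∑ i ∈ Finset.range (M + 1 - k), ‖h (k + i)‖^2 :=
              Finset.sum_le_sum_of_subset_of_nonneg
                (Finset.range_subset_range.2 (by omega)) (fun i _ _ => sq_nonneg _)
      have h1 : ∑ j ∈ J, (‖h j‖ + ‖h (j-1)‖)^2
          ≤ ∑ j ∈ J, (2*‖h j‖^2 + 2*‖h (j-1)‖^2) := by
        refine Finset.sum_le_sum fun j _ => ?_
        nlinarith [sq_nonneg (‖h j‖ - ‖h (j-1)‖)]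
      rw [Finset.sum_add_distrib, ← Finset.mul_sum, ← Finset.mul_sum] at h1
      linarith
    calc V ≤ ∑ j ∈ J, (τ * ‖Dg j‖) * (‖h j‖ + ‖h (j-1)‖) := Finset.sum_le_sum hterm
      _ ≤ Real.sqrt (∑ j ∈ J, (τ * ‖Dg j‖)^2) * Real.sqrt (∑ j ∈ J, (‖h j‖ + ‖h (j-1)‖)^2) := hcs
      _ ≤ Real.sqrt (τ^2 * SD) * Real.sqrt (4 * S) := by
          rw [hx]
          exact mul_le_mul_of_nonneg_left (Real.sqrt_le_sqrt hyle) (Real.sqrt_nonneg _)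
      _ = 2 * τ * Real.sqrt SD * Real.sqrt S := by
          rw [Real.sqrt_mul (sq_nonneg τ), Real.sqrt_sq hτ0.le,
            Real.sqrt_mul (by norm_num : (0:ℝ) ≤ 4),
            show Real.sqrt 4 = 2 by rw [show (4:ℝ) = 2^2 by norm_num, Real.sqrt_sq]; norm_num]
          ring
  -- (7) combine
  set a : ℝ := Real.sqrt (τ * S) with ha
  set b : ℝ := Real.sqrt (τ * SD) with hb
  have hann : 0 ≤ a := Real.sqrt_nonneg _
  have hbnn : 0 ≤ b := Real.sqrt_nonneg _
  have ha2 : a^2 = τ * S := Real.sq_sqrt (by positivity)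
  have hb2 : b^2 = τ * SD := Real.sq_sqrt (by positivity)
  -- Poincare in sqrt form
  have hab : Real.sqrt 2 * a ≤ (N:ℝ) * τ * b := by
    have h1 : Real.sqrt 2 * a = Real.sqrt (2 * (τ * S)) := by
      rw [Real.sqrt_mul (by norm_num : (0:ℝ) ≤ 2), ha]
    have h2 : (N:ℝ) * τ * b = Real.sqrt (((N:ℝ)*τ)^2 * (τ * SD)) := by
      rw [Real.sqrt_mul (sq_nonneg _), Real.sqrt_sq (by positivity : (0:ℝ) ≤ (N:ℝ)*τ), hb]
    rw [h1, h2]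
    apply Real.sqrt_le_sqrt
    nlinarith [hPoin, hNpos, hτ0]
  -- product identity : a*b = τ * √S * √SD
  have habprod : a * b = τ * (Real.sqrt S * Real.sqrt SD) := by
    rw [ha, hb, ← Real.sqrt_mul (by positivity : (0:ℝ) ≤ τ * S),
      show τ * S * (τ * SD) = τ^2 * (S * SD) by ring,
      Real.sqrt_mul (sq_nonneg τ), Real.sqrt_sq hτ0.le, Real.sqrt_mul hSnn]
  have hs2 : Real.sqrt 2 ^ 2 = 2 := Real.sq_sqrt (by norm_num)
  have hs2nn : (0:ℝ) ≤ Real.sqrt 2 := Real.sqrt_nonneg _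
  -- S / N ≤ (√2/2) a b
  have hdiv : Real.sqrt 2 * S ≤ (N:ℝ) * (b * a) := by
    have h1 : Real.sqrt 2 * a * a ≤ (N:ℝ) * τ * b * a :=
      mul_le_mul_of_nonneg_right hab hann
    have h3 : τ * (Real.sqrt 2 * S) ≤ τ * ((N:ℝ) * (b * a)) := by nlinarith [h1, ha2]
    exact le_of_mul_le_mul_left h3 hτ0
  have hmean : ‖h m₀‖^2 ≤ Real.sqrt 2 / 2 * (a * b) := by
    have h4 : 2 * S ≤ Real.sqrt 2 * ((N:ℝ) * (b * a)) := by nlinarith [hdiv, hs2, hs2nn]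
    have h5 : (N:ℝ) * ‖h m₀‖^2 ≤ (N:ℝ) * (Real.sqrt 2 / 2 * (a * b)) := by
      calc (N:ℝ) * ‖h m₀‖^2 ≤ S := hmin
        _ ≤ (N:ℝ) * (Real.sqrt 2 / 2 * (a * b)) := by nlinarith [h4]
    exact le_of_mul_le_mul_left (by linarith [h5]) hNpos
  have hVab : V ≤ 2 * (a * b) := by
    calc V ≤ 2 * τ * Real.sqrt SD * Real.sqrt S := hVle
      _ = 2 * (a * b) := by rw [habprod]; ring
  have hkey : ‖h n‖^2 ≤ (2 + Real.sqrt 2 / 2) * (a * b) := by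
    calc ‖h n‖^2 ≤ ‖h m₀‖^2 + V := htelbound
      _ ≤ Real.sqrt 2 / 2 * (a * b) + 2 * (a * b) := add_le_add hmean hVab
      _ = (2 + Real.sqrt 2 / 2) * (a * b) := by ring
  -- identify the seqNorm0 quantities
  set A : ℝ := seqNorm0 τ k M g with hA
  set B : ℝ := seqNorm0 τ (k+1) M Dg with hB
  have hAval : A = Real.sqrt (τ * SG) := by rw [hA, seqNorm0, hSG, hI]
  have hBval : B = b := by rw [hB, seqNorm0, hb, hSD, hJ]
  have hAnn : 0 ≤ A := by rw [hAval]; exact Real.sqrt_nonneg _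
  have haA : a ≤ A := by
    rw [ha, hAval]
    apply Real.sqrt_le_sqrt
    exact mul_le_mul_of_nonneg_left hS_le hτ0.le
  -- final assembly
  have hcA2 : cA^2 = 2 + Real.sqrt 2 / 2 := Real.sq_sqrt (by positivity)
  have hcAnn : 0 ≤ cA := Real.sqrt_nonneg _
  rw [show (Dq τ)^[k] f n - mk = h n by rw [hh]]
  rw [← Real.sqrt_eq_rpow, ← Real.sqrt_eq_rpow]
  have hRnn : 0 ≤ Real.sqrt 2 * cA * Real.sqrt A * Real.sqrt B := by positivity
  have hR2 : (Real.sqrt 2 * cA * Real.sqrt A * Real.sqrt B)^2 = 2 * cA^2 * A * B := by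
    have hBnn : 0 ≤ B := by rw [hBval]; exact hbnn
    rw [mul_pow, mul_pow, mul_pow, hs2, Real.sq_sqrt hAnn, Real.sq_sqrt hBnn]
  have hfin : ‖h n‖^2 ≤ (Real.sqrt 2 * cA * Real.sqrt A * Real.sqrt B)^2 := by
    rw [hR2, hcA2, hBval]
    calc ‖h n‖^2 ≤ (2 + Real.sqrt 2 / 2) * (a * b) := hkey
      _ ≤ (2 + Real.sqrt 2 / 2) * (A * b) := by
          apply mul_le_mul_of_nonneg_left (mul_le_mul_of_nonneg_right haA hbnn)
          positivity
      _ ≤ 2 * (2 + Real.sqrt 2 / 2) * A * b := by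
          have hx : 0 ≤ (2 + Real.sqrt 2 / 2) * (A * b) := by positivity
          calc (2 + Real.sqrt 2 / 2) * (A * b)
              ≤ 2 * ((2 + Real.sqrt 2 / 2) * (A * b)) := le_mul_of_one_le_left hx one_le_two
            _ = 2 * (2 + Real.sqrt 2 / 2) * A * b := by ring
  calc ‖h n‖ = Real.sqrt (‖h n‖^2) := (Real.sqrt_sq (norm_nonneg _)).symm
    _ ≤ Real.sqrt ((Real.sqrt 2 * cA * Real.sqrt A * Real.sqrt B)^2) := Real.sqrt_le_sqrt hfin
    _ = Real.sqrt 2 * cA * Real.sqrt A * Real.sqrt B := Real.sqrt_sq hRnn
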